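/- Let C be a nonempty closed subset of the Cantor set, let X ⊆ C × [0,1] be a blade space over C, and let g : X → X be a fiber-injection fixing the base, i.e., g is continuous and there exist a continuous map μ : C → C and, for each c ∈ C, a continuous injection h_c from the fiber X ∩ ({c} × [0,1]) into the fiber X ∩ ({μ(c)} × [0,1]) such that g(c,x) = (μ(c), h_c(x)) for all (c,x) ∈ X and h_c(0) = 0 for all c ∈ C. Then g is not separated, continuum-wise semi-turbulent. -/
import Mathlib


open Set

section Helpers

lemma myPreCantorSubset (n : ℕ) : preCantorSet n ⊆ Icc (0:ℝ) 1 := by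
  induction n with
  | zero => simp
  | succ n ih =>
    rintro x (⟨y, hy, rfl⟩ | ⟨y, hy, rfl⟩) <;>
      obtain ⟨h0, h1⟩ := ih hy <;> constructor <;> simp only [] <;> linarith

lemma myPreCantorLen (n : ℕ) : ∀ a b : ℝ, a ≤ b → Icc a b ⊆ preCantorSet n →
    b - a ≤ (1/3)^n := by
  induction n with
  | zero =>
    intro a b hab h
    have h0 := myPreCantorSubset 0 (h (left_mem_Icc.2 hab))
    have h1 := myPreCantorSubset 0 (h (right_mem_Icc.2 hab))
    simp only [mem_Icc] at h0 h1
    simp only [pow_zero]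
    linarith
  | succ n ih =>
    intro a b hab h
    have hsub : Icc a b ⊆ ((· / 3) '' preCantorSet n) ∪ ((fun x => (2 + x) / 3) '' preCantorSet n) := by
      rwa [preCantorSet_succ] at h
    have hL : ∀ x ∈ (· / 3) '' preCantorSet n, x ≤ 1/3 := by
      rintro x ⟨y, hy, rfl⟩
      have := (myPreCantorSubset n hy).2
      linarith
    have hR : ∀ x ∈ (fun x => (2 + x) / 3) '' preCantorSet n, (2:ℝ)/3 ≤ x := by
      rintro x ⟨y, hy, rfl⟩
      have := (myPreCantorSubset n hy).1
      simp only []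
      linarith
    have hone : Icc a b ⊆ (· / 3) '' preCantorSet n ∨
        Icc a b ⊆ (fun x => (2 + x) / 3) '' preCantorSet n := by
      by_contra hcon
      push_neg at hcon
      obtain ⟨hc1, hc2⟩ := hcon
      obtain ⟨x1, hx1, hx1n⟩ := not_subset.1 hc1
      obtain ⟨x2, hx2, hx2n⟩ := not_subset.1 hc2
      have hx1R : x1 ∈ (fun x => (2 + x) / 3) '' preCantorSet n := (hsub hx1).resolve_left hx1n
      have hx2L : x2 ∈ (· / 3) '' preCantorSet n := (hsub hx2).resolve_right hx2n
      have h12 : x2 ≤ 1/3 := hL _ hx2L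
      have h21 : (2:ℝ)/3 ≤ x1 := hR _ hx1R
      have hmem : (1/2 : ℝ) ∈ Icc a b := by
        simp only [mem_Icc] at hx1 hx2 ⊢
        constructor <;> linarith
      rcases hsub hmem with hm | hm
      · have := hL _ hm; linarith
      · have := hR _ hm; linarith
    have key : ∀ (c : ℝ), (∀ x ∈ Icc a b, ∃ y ∈ preCantorSet n, x = (c + y)/3) →
        b - a ≤ (1/3)^(n+1) := by
      intro c hc
      obtain ⟨ya, hya, hya'⟩ := hc a (left_mem_Icc.2 hab)
      obtain ⟨yb, hyb, hyb'⟩ := hc b (right_mem_Icc.2 hab)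
      have hab' : ya ≤ yb := by linarith [hab, hya', hyb']
      have hsub' : Icc ya yb ⊆ preCantorSet n := by
        intro y hy
        have hmem : (c + y)/3 ∈ Icc a b := by
          simp only [mem_Icc] at hy ⊢
          constructor <;> [linarith [hy.1]; linarith [hy.2]]
        obtain ⟨z, hz, hz'⟩ := hc _ hmem
        have : z = y := by linarith
        rwa [← this]
      have := ih ya yb hab' hsub'
      have hpow : ((1:ℝ)/3)^(n+1) = (1/3)^n / 3 := by ring
      rw [hpow]
      linarith [hyb', hya']
    rcases hone with hone | hone
    · exact key 0 (fun x hx => by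
        obtain ⟨y, hy, hy'⟩ := hone hx
        exact ⟨y, hy, by linarith [hy']⟩)
    · exact key 2 (fun x hx => by
        obtain ⟨y, hy, hy'⟩ := hone hx
        exact ⟨y, hy, hy'.symm⟩)

lemma myCantorSubsingleton {S : Set ℝ} (hS : S ⊆ cantorSet) (hconn : IsPreconnected S) :
    S.Subsingleton := by
  intro a ha b hb
  by_contra hne
  wlog hlt : a < b generalizing a b
  · exact this hb ha (Ne.symm hne) (lt_of_le_of_ne (not_lt.1 hlt) (Ne.symm hne))
  have hIcc : Icc a b ⊆ S := hconn.Icc_subset ha hb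
  have hall : ∀ n : ℕ, b - a ≤ (1/3)^n := fun n =>
    myPreCantorLen n a b hlt.le (fun x hx => Set.mem_iInter.1 (hS (hIcc hx)) n)
  have hba : 0 < b - a := by linarith
  obtain ⟨n, hn⟩ := exists_pow_lt_of_lt_one hba (by norm_num : (1:ℝ)/3 < 1)
  exact absurd (hall n) (not_le.2 hn)

lemma myItinerary {Y : Type} [MetricSpace Y] (f : Y → Y) (hf : Continuous f)
    (K : Bool → Set Y) (hKc : ∀ i, IsCompact (K i)) (hKne : ∀ i, (K i).Nonempty)
    (hcov : ∀ i j, K j ⊆ f '' K i)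
    (s : ℕ → Bool) : ∃ y, ∀ n, f^[n] y ∈ K (s n) := by
  have claim : ∀ n : ℕ, ∀ z ∈ K (s n),
      ∃ y, f^[n] y = z ∧ ∀ m ≤ n, f^[m] y ∈ K (s m) := by
    intro n
    induction n with
    | zero => exact fun z hz => ⟨z, rfl, fun m hm => by simpa [Nat.le_zero.1 hm] using hz⟩
    | succ n ih =>
      intro z hz
      obtain ⟨z', hz', hfz'⟩ := hcov (s n) (s (n+1)) hz
      obtain ⟨y, hy, hall⟩ := ih z' hz'
      refine ⟨y, by rw [Function.iterate_succ_apply', hy, hfz'], ?_⟩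
      intro m hm
      rcases Nat.le_succ_iff.1 hm with h | h
      · exact hall m h
      · subst h
        rw [Function.iterate_succ_apply', hy, hfz']
        exact hz
  set D : ℕ → Set Y := fun n => K (s 0) ∩ ⋂ m ∈ Finset.range (n+1), f^[m] ⁻¹' K (s m) with hD
  have hDne : ∀ n, (D n).Nonempty := by
    intro n
    obtain ⟨z, hz⟩ := hKne (s n)
    obtain ⟨y, _, hall⟩ := claim n z hz
    refine ⟨y, by simpa using hall 0 (Nat.zero_le n), ?_⟩
    simp only [mem_iInter, Finset.mem_range, mem_preimage]
    exact fun m hm => hall m (Nat.lt_succ_iff.1 hm)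
  have hDcl : ∀ n, IsClosed (D n) :=
    fun n => ((hKc (s 0)).isClosed).inter
      (isClosed_biInter fun m _ => ((hKc (s m)).isClosed).preimage (hf.iterate m))
  have hDdec : ∀ n, D (n+1) ⊆ D n := by
    intro n x hx
    refine ⟨hx.1, ?_⟩
    have h2 := hx.2
    simp only [mem_iInter, Finset.mem_range, mem_preimage] at h2 ⊢
    exact fun m hm => h2 m (hm.trans (Nat.lt_succ_self _))
  have hDcomp : ∀ n, IsCompact (D n) := fun n => (hKc (s 0)).of_isClosed_subset (hDcl n)
    (inter_subset_left)
  obtain ⟨y, hy⟩ := IsCompact.nonempty_iInter_of_sequence_nonempty_isCompact_isClosed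
    D (fun n => hDdec n) hDne (hDcomp 0) hDcl
  refine ⟨y, fun n => ?_⟩
  have h2 := (Set.mem_iInter.1 hy n).2
  simp only [mem_iInter, Finset.mem_range, mem_preimage] at h2
  exact h2 n (Nat.lt_succ_self n)

lemma myUncountable : ¬ Countable (ℕ → Bool) := by
  intro h
  have h2 : Countable (Set ℕ) := by
    classical
    have hinj : Function.Injective (fun s : Set ℕ => fun n => decide (n ∈ s)) := by
      intro s t hst
      ext n
      have := congrFun hst n
      simpa using this
    exact hinj.countable
  obtain ⟨f, hf⟩ := (Countable.exists_injective_nat (Set ℕ))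
  exact Function.cantor_injective f hf

end Helpers


/-- A continuous self-map `h` of a compact metric-type space `Z` is
*separated, continuum-wise semi-turbulent* if there are a continuum `Y` (a nonempty compact
connected metric space), disjoint subcontinua `A, B ⊆ Z`, and continuous maps `φ : Z → Y`,
`f : Y → Y` with `f ∘ φ = φ ∘ h`, `φ(A) ∩ φ(B) = ∅`, and
`φ(A) ∪ φ(B) ⊆ φ(h(A)) ∩ φ(h(B))`. -/
def SepCwSemiTurbulent {Z : Type*} [TopologicalSpace Z] (h : Z → Z) : Prop :=
  ∃ (Y : Type) (_ : MetricSpace Y) (_ : CompactSpace Y) (_ : ConnectedSpace Y)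
    (_ : Nonempty Y) (A B : Set Z) (φ : Z → Y) (f : Y → Y),
    IsCompact A ∧ IsCompact B ∧ IsConnected A ∧ IsConnected B ∧ Disjoint A B ∧
    Continuous φ ∧ Continuous f ∧ f ∘ φ = φ ∘ h ∧
    Disjoint (φ '' A) (φ '' B) ∧
    φ '' A ∪ φ '' B ⊆ φ '' (h '' A) ∩ φ '' (h '' B)

/-- Let `C` be a nonempty closed subset of the (ternary) Cantor set, let
`X ⊆ C × [0,1]` be a blade space over `C` (a compact set whose fiber over each `c ∈ C` is
`{c} × [0, ρ(c)]`), and let `g : X → X` be a continuous fiber-injection fixing the base: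
`g(c,x) = (μ(c), h_c(x))` for a continuous `μ : C → C` and fiberwise injections `h_c` with
`h_c(0) = 0`. Then `g` is not separated, continuum-wise semi-turbulent. -/
theorem stmt19 (C : Set ℝ) (hC : C ⊆ cantorSet) (hCne : C.Nonempty) (hCcl : IsClosed C)
    (X : Set (ℝ × ℝ)) (hXsub : X ⊆ C ×ˢ Icc (0:ℝ) 1) (hXcomp : IsCompact X)
    (hblade : ∀ c ∈ C, ∃ ρ ∈ Icc (0:ℝ) 1, {t : ℝ | (c, t) ∈ X} = Icc 0 ρ)
    (g : X → X) (hg : Continuous g)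
    (μ : ℝ → ℝ) (hμc : ContinuousOn μ C) (hμm : MapsTo μ C C)
    (hfst : ∀ p : X, (g p : ℝ × ℝ).1 = μ (p : ℝ × ℝ).1)
    (hinj : ∀ p q : X, (p : ℝ × ℝ).1 = (q : ℝ × ℝ).1 → g p = g q → p = q)
    (hzero : ∀ (c : ℝ) (h : ((c, (0:ℝ)) : ℝ × ℝ) ∈ X), (g ⟨(c, 0), h⟩ : ℝ × ℝ).2 = 0) :
    ¬ SepCwSemiTurbulent g := by
  classical
  rintro ⟨Y, instM, instCpt, instConn, instNe, A, B, φ, f, hAcomp, hBcomp, hAconn, hBconn,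
    hABdisj, hφ, hf, hcomm, hsepY, hcover⟩
  -- ## The image arc `E = g '' A` lies in a single fiber
  set E : Set (ℝ × ℝ) := (fun p : X => (g p : ℝ × ℝ)) '' A with hE_def
  have hEX : ∀ e ∈ E, e ∈ X := by
    rintro e ⟨p, hp, rfl⟩
    exact (g p).2
  have hEconn : IsConnected E :=
    hAconn.image _ (continuous_subtype_val.comp hg).continuousOn
  have hEcomp : IsCompact E := hAcomp.image (continuous_subtype_val.comp hg)
  obtain ⟨p₀, hp₀⟩ := hAconn.nonempty
  have he₀ : (g p₀ : ℝ × ℝ) ∈ E := ⟨p₀, hp₀, rfl⟩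
  set a' : ℝ := (g p₀ : ℝ × ℝ).1 with ha'_def
  have hfstsub : (Prod.fst '' E).Subsingleton := by
    apply myCantorSubsingleton
    · rintro _ ⟨e, he, rfl⟩
      exact hC (hXsub (hEX e he)).1
    · exact (hEconn.image _ continuous_fst.continuousOn).isPreconnected
  have hfstE : ∀ e ∈ E, e.1 = a' := fun e he =>
    hfstsub (Set.mem_image_of_mem Prod.fst he) (Set.mem_image_of_mem Prod.fst he₀)
  have ha'C : a' ∈ C := (hXsub (hEX _ he₀)).1
  -- ## heights of `E` and the vertical segment over `a'`
  set S2 : Set ℝ := Prod.snd '' E with hS2_def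
  have hS2comp : IsCompact S2 := hEcomp.image continuous_snd
  have hS2ne : S2.Nonempty := ⟨_, Set.mem_image_of_mem Prod.snd he₀⟩
  set β : ℝ := sSup S2 with hβ_def
  have hβmem : β ∈ S2 := hS2comp.sSup_mem hS2ne
  have hS2sub : ∀ v ∈ S2, 0 ≤ v ∧ v ≤ 1 := by
    rintro _ ⟨e, he, rfl⟩
    exact (hXsub (hEX e he)).2
  have hβ0 : 0 ≤ β := (hS2sub β hβmem).1
  have hβX : (a', β) ∈ X := by
    obtain ⟨e, he, he2⟩ := hβmem
    have h1 := hfstE e he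
    have h2 := hEX e he
    rwa [← Prod.mk.eta (p := e), h1, he2] at h2
  obtain ⟨ρ, hρmem, hfib⟩ := hblade a' ha'C
  have hβρ : β ≤ ρ := ((Set.ext_iff.1 hfib β).1 hβX).2
  have hmemX : ∀ t, 0 ≤ t → t ≤ β → (a', t) ∈ X := fun t h0 h1 =>
    (Set.ext_iff.1 hfib t).2 ⟨h0, h1.trans hβρ⟩
  set cl : ℝ → ℝ := fun t => max 0 (min t β) with hcl_def
  have hcl0 : ∀ t, 0 ≤ cl t := fun t => le_max_left _ _
  have hclβ : ∀ t, cl t ≤ β := fun t => max_le hβ0 (min_le_right _ _)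
  have hclid : ∀ t, 0 ≤ t → t ≤ β → cl t = t := by
    intro t h0 h1
    simp only [hcl_def]
    rw [min_eq_left h1, max_eq_right h0]
  have hclcont : Continuous cl := continuous_const.max (continuous_id.min continuous_const)
  set xf : ℝ → X := fun t => ⟨(a', cl t), hmemX _ (hcl0 t) (hclβ t)⟩ with hxf_def
  have hxfc : Continuous xf :=
    Continuous.subtype_mk (continuous_const.prodMk hclcont) _
  -- ## the fiberwise height functions
  set Hn : ℕ → ℝ → ℝ := fun n t => ((g^[n] (xf t) : X) : ℝ × ℝ).2 with hHn_def
  set cn : ℕ → ℝ := fun n => μ^[n] a' with hcn_def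
  have hcnC : ∀ n, cn n ∈ C := by
    intro n
    induction n with
    | zero => exact ha'C
    | succ n ih =>
      simp only [hcn_def, Function.iterate_succ_apply']
      exact hμm ih
  have horb1 : ∀ n t, ((g^[n] (xf t) : X) : ℝ × ℝ).1 = cn n := by
    intro n
    induction n with
    | zero => intro t; rfl
    | succ n ih =>
      intro t
      simp only [Function.iterate_succ_apply']
      rw [hfst, ih t]
      simp only [hcn_def, Function.iterate_succ_apply']
  have hdomX : ∀ (n : ℕ) (t : ℝ), ((g^[n] (xf t) : X) : ℝ × ℝ) ∈ X := fun n t =>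
    (g^[n] (xf t)).2
  have hH01 : ∀ n t, 0 ≤ Hn n t ∧ Hn n t ≤ 1 := fun n t => (hXsub (hdomX n t)).2
  have hHcont : ∀ n, Continuous (Hn n) := fun n =>
    continuous_snd.comp (continuous_subtype_val.comp ((hg.iterate n).comp hxfc))
  have hzero' : ∀ p : X, (p : ℝ × ℝ).2 = 0 → ((g p : X) : ℝ × ℝ).2 = 0 := by
    rintro ⟨⟨c, t⟩, hmem⟩ hp
    simp only at hp
    subst hp
    exact hzero c hmem
  have hH0 : ∀ n, Hn n 0 = 0 := by
    intro n
    induction n with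
    | zero =>
      simp only [hHn_def, Function.iterate_zero_apply, hxf_def]
      exact hclid 0 le_rfl hβ0
    | succ n ih =>
      simp only [hHn_def, Function.iterate_succ_apply'] at ih ⊢
      exact hzero' _ ih
  have hiter_inj : ∀ (n : ℕ) (t t' : ℝ), g^[n] (xf t) = g^[n] (xf t') → xf t = xf t' := by
    intro n
    induction n with
    | zero => exact fun t t' h => h
    | succ n ih =>
      intro t t' h
      simp only [Function.iterate_succ_apply'] at h
      have hfst_eq : ((g^[n] (xf t) : X) : ℝ × ℝ).1 = ((g^[n] (xf t') : X) : ℝ × ℝ).1 := by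
        rw [horb1 n t, horb1 n t']
      exact ih t t' (hinj _ _ hfst_eq h)
  have hHinj : ∀ n, InjOn (Hn n) (Icc 0 β) := by
    intro n t ht t' ht' h
    have hval : ((g^[n] (xf t) : X) : ℝ × ℝ) = ((g^[n] (xf t') : X) : ℝ × ℝ) :=
      Prod.ext (by rw [horb1 n t, horb1 n t']) h
    have hxx := hiter_inj n t t' (Subtype.ext hval)
    have hcl : cl t = cl t' := congrArg (fun p : X => (p : ℝ × ℝ).2) hxx
    rwa [hclid t ht.1 ht.2, hclid t' ht'.1 ht'.2] at hcl
  have hHmono : ∀ n, StrictMonoOn (Hn n) (Icc 0 β) := fun n =>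
    ContinuousOn.strictMonoOn_of_injOn_Icc hβ0
      (by rw [hH0 n]; exact (hH01 n β).1) (hHcont n).continuousOn (hHinj n)
  -- ## `g '' A` lies on the segment
  have hGAseg : ∀ q ∈ g '' A, ∃ t, (0 ≤ t ∧ t ≤ β) ∧ xf t = q := by
    rintro _ ⟨p, hp, rfl⟩
    have hqE : (g p : ℝ × ℝ) ∈ E := ⟨p, hp, rfl⟩
    refine ⟨(g p : ℝ × ℝ).2, ⟨(hS2sub _ ⟨_, hqE, rfl⟩).1,
      le_csSup hS2comp.bddAbove ⟨_, hqE, rfl⟩⟩, ?_⟩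
    apply Subtype.ext
    have h1 : cl (g p : ℝ × ℝ).2 = (g p : ℝ × ℝ).2 :=
      hclid _ (hS2sub _ ⟨_, hqE, rfl⟩).1 (le_csSup hS2comp.bddAbove ⟨_, hqE, rfl⟩)
    simp only [hxf_def, h1]
    exact Prod.ext (hfstE _ hqE).symm rfl
  -- ## the semiconjugacy, iterated
  have hcommn : ∀ (n : ℕ) (p : X), f^[n] (φ p) = φ (g^[n] p) := by
    intro n
    induction n with
    | zero => exact fun p => rfl
    | succ n ih =>
      intro p
      rw [Function.iterate_succ_apply', ih p, Function.iterate_succ_apply']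
      exact congrFun hcomm (g^[n] p)
  -- ## the horseshoe sets
  set K : Bool → Set Y := fun i => if i then φ '' B else φ '' A with hK_def
  have hKc : ∀ i, IsCompact (K i) := by
    intro i
    cases i
    · exact hAcomp.image hφ
    · exact hBcomp.image hφ
  have hKne : ∀ i, (K i).Nonempty := by
    intro i
    cases i
    · exact (hAconn.nonempty).image φ
    · exact (hBconn.nonempty).image φ
  have hKdisj : Disjoint (K false) (K true) := by
    simp only [hK_def, if_true, if_false, Bool.false_eq_true]
    exact hsepY
  have hfKA : f '' (φ '' A) = φ '' (g '' A) := by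
    rw [← image_comp, hcomm, image_comp]
  have hfKB : f '' (φ '' B) = φ '' (g '' B) := by
    rw [← image_comp, hcomm, image_comp]
  have hKunion : ∀ j, K j ⊆ φ '' A ∪ φ '' B := by
    intro j
    cases j
    · simp only [hK_def, Bool.false_eq_true, if_false]
      exact subset_union_left
    · simp only [hK_def, if_true]
      exact subset_union_right
  have hcov : ∀ i j, K j ⊆ f '' K i := by
    intro i j y hy
    cases i
    · show y ∈ f '' (φ '' A)
      rw [hfKA]
      exact (hcover (hKunion j hy)).1
    · show y ∈ f '' (φ '' B)
      rw [hfKB]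
      exact (hcover (hKunion j hy)).2
  -- ## sequential compactness extraction
  have hCcomp : IsCompact C := isCompact_cantorSet.of_isClosed_subset hCcl hC
  haveI hIccNe : Nonempty (Icc (0:ℝ) β) := ⟨⟨0, ⟨le_rfl, hβ0⟩⟩⟩
  obtain ⟨u', hu'⟩ := TopologicalSpace.exists_dense_seq (Icc (0:ℝ) β)
  set u : ℕ → ℝ := fun k => (u' k : ℝ) with hu_def
  have hu : ∀ k, 0 ≤ u k ∧ u k ≤ β := fun k => (u' k).2
  have hudense : ∀ t t' : ℝ, 0 ≤ t → t' ≤ β → t < t' → ∃ k, t < u k ∧ u k < t' := by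
    intro t t' h0 h1 htt'
    have hVopen : IsOpen {s : Icc (0:ℝ) β | t < (s : ℝ) ∧ (s : ℝ) < t'} := by
      have : {s : Icc (0:ℝ) β | t < (s : ℝ) ∧ (s : ℝ) < t'} =
          (Subtype.val) ⁻¹' (Ioo t t') := rfl
      rw [this]
      exact isOpen_Ioo.preimage continuous_subtype_val
    have hVne : {s : Icc (0:ℝ) β | t < (s : ℝ) ∧ (s : ℝ) < t'}.Nonempty := by
      refine ⟨⟨(t + t') / 2, ⟨by linarith, by linarith⟩⟩, ⟨by simp; linarith, by simp; linarith⟩⟩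
    obtain ⟨k, hk⟩ := hu'.exists_mem_open hVopen hVne
    exact ⟨k, hk.1, hk.2⟩
  set Gseq : ℕ → ℝ × (ℕ → ℝ) := fun n => (cn n, fun k => Hn n (u k)) with hGseq_def
  have hWcomp : IsCompact (C ×ˢ (univ.pi fun _ : ℕ => Icc (0:ℝ) 1)) :=
    hCcomp.prod (isCompact_univ_pi fun _ => isCompact_Icc)
  have hGW : ∀ n, Gseq n ∈ C ×ˢ (univ.pi fun _ : ℕ => Icc (0:ℝ) 1) := by
    intro n
    refine ⟨hcnC n, fun k _ => ?_⟩
    exact ⟨(hH01 n (u k)).1, (hH01 n (u k)).2⟩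
  obtain ⟨q, hqW, ψ, hψ, hψt⟩ := hWcomp.isSeqCompact hGW
  set cstar : ℝ := q.1 with hcstar_def
  set F : ℕ → ℝ := q.2 with hF_def
  have htendc : Filter.Tendsto (fun j => cn (ψ j)) Filter.atTop (nhds cstar) :=
    (continuous_fst.tendsto q).comp hψt
  have htendF : ∀ k, Filter.Tendsto (fun j => Hn (ψ j) (u k)) Filter.atTop (nhds (F k)) := by
    intro k
    have h2 : Filter.Tendsto (fun j => (Gseq (ψ j)).2) Filter.atTop (nhds q.2) :=
      (continuous_snd.tendsto q).comp hψt
    exact tendsto_pi_nhds.1 h2 k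
  have hF01 : ∀ k, 0 ≤ F k ∧ F k ≤ 1 := fun k => hqW.2 k (mem_univ k)
  have hFmono : ∀ k k', u k ≤ u k' → F k ≤ F k' := by
    intro k k' hkk'
    refine le_of_tendsto_of_tendsto' (htendF k) (htendF k') (fun j => ?_)
    rcases eq_or_lt_of_le hkk' with h | h
    · rw [h]
    · exact ((hHmono (ψ j)) ⟨(hu k).1, (hu k).2⟩ ⟨(hu k').1, (hu k').2⟩ h).le
  -- ## the monotone envelope function
  set hbar : ℝ → ℝ := fun t => sSup (insert (0:ℝ) {v | ∃ k, u k ≤ t ∧ F k = v}) with hbar_def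
  have hbddA : ∀ t, BddAbove (insert (0:ℝ) {v | ∃ k, u k ≤ t ∧ F k = v}) := by
    intro t
    refine ⟨1, ?_⟩
    rintro v (rfl | ⟨k, _, rfl⟩)
    · norm_num
    · exact (hF01 k).2
  have hbarne : ∀ t : ℝ, (insert (0:ℝ) {v | ∃ k, u k ≤ t ∧ F k = v}).Nonempty :=
    fun t => ⟨0, mem_insert _ _⟩
  have hbarmono : Monotone hbar := by
    intro t t' h
    apply csSup_le_csSup (hbddA t') (hbarne t)
    apply insert_subset_insert
    rintro v ⟨k, hk, hv⟩
    exact ⟨k, hk.trans h, hv⟩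
  have hbar_ge : ∀ t k, u k ≤ t → F k ≤ hbar t := fun t k h =>
    le_csSup (hbddA t) (mem_insert_of_mem _ ⟨k, h, rfl⟩)
  have hbar_le : ∀ t k, (∀ k', u k' ≤ t → F k' ≤ F k) → hbar t ≤ F k := by
    intro t k hk
    apply csSup_le (hbarne t)
    rintro v (rfl | ⟨k', hk', rfl⟩)
    · exact (hF01 k).1
    · exact hk k' hk'
  set Bad : Set ℝ := {t | ¬ContinuousAt hbar t} ∪ {0, β} with hBad_def
  have hBadc : Bad.Countable :=
    (hbarmono.countable_not_continuousAt).union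
      ((Set.finite_singleton β).insert 0).countable
  -- ## the itinerary family
  set sfun : (ℕ → Bool) → ℕ → Bool := fun σ n =>
    if ∃ j, ψ (3*j+1) = n then true
    else if h : ∃ j, ψ (3*j+2) = n then σ h.choose else false with hsfun_def
  have hψinj := hψ.injective
  have lab0 : ∀ σ j, sfun σ (ψ (3*j)) = false := by
    intro σ j
    simp only [hsfun_def]
    rw [if_neg, dif_neg]
    · rintro ⟨j', hj'⟩
      have := hψinj hj'
      omega
    · rintro ⟨j', hj'⟩
      have := hψinj hj'
      omega
  have lab1 : ∀ σ j, sfun σ (ψ (3*j+1)) = true := by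
    intro σ j
    simp only [hsfun_def]
    rw [if_pos ⟨j, rfl⟩]
  have lab2 : ∀ σ j, sfun σ (ψ (3*j+2)) = σ j := by
    intro σ j
    simp only [hsfun_def]
    rw [if_neg, dif_pos ⟨j, rfl⟩]
    · congr 1
      have h : ∃ j', ψ (3*j'+2) = ψ (3*j+2) := ⟨j, rfl⟩
      have := hψinj h.choose_spec
      omega
    · rintro ⟨j', hj'⟩
      have := hψinj hj'
      omega
  have hyσ : ∀ σ : ℕ → Bool, ∃ t, (0 ≤ t ∧ t ≤ β) ∧
      ∀ n, f^[n] (φ (xf t)) ∈ K (sfun σ n) := by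
    intro σ
    obtain ⟨y, hy⟩ := myItinerary f hf K hKc hKne hcov (sfun σ)
    have hy0 : y ∈ φ '' (g '' A) := by
      have h1 : y ∈ K (sfun σ 0) := hy 0
      exact (hcover (hKunion _ h1)).1
    obtain ⟨xq, hxq, hxqy⟩ := hy0
    obtain ⟨t, ht, hxft⟩ := hGAseg xq hxq
    refine ⟨t, ht, fun n => ?_⟩
    rw [hxft, hxqy]
    exact hy n
  set θ : (ℕ → Bool) → ℝ := fun σ => (hyσ σ).choose with hθ_def
  have hθIcc : ∀ σ, 0 ≤ θ σ ∧ θ σ ≤ β := fun σ => (hyσ σ).choose_spec.1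
  have hθit : ∀ σ n, f^[n] (φ (xf (θ σ))) ∈ K (sfun σ n) := fun σ => (hyσ σ).choose_spec.2
  have θinj : Function.Injective θ := by
    intro σ σ' h
    funext j
    by_contra hne
    have h1 : f^[ψ (3*j+2)] (φ (xf (θ σ))) ∈ K (σ j) := by
      have := hθit σ (ψ (3*j+2)); rwa [lab2] at this
    have h2 : f^[ψ (3*j+2)] (φ (xf (θ σ'))) ∈ K (σ' j) := by
      have := hθit σ' (ψ (3*j+2)); rwa [lab2] at this
    rw [h] at h1
    cases hb : σ j <;> cases hb' : σ' j
    · exact hne (by rw [hb, hb'])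
    · rw [hb] at h1; rw [hb'] at h2
      exact Set.disjoint_left.1 hKdisj h1 h2
    · rw [hb] at h1; rw [hb'] at h2
      exact Set.disjoint_left.1 hKdisj h2 h1
    · exact hne (by rw [hb, hb'])
  -- ## find a good parameter
  have hgoodσ : ∃ σ, θ σ ∉ Bad := by
    by_contra hcon
    push_neg at hcon
    haveI := hBadc.to_subtype
    have : Countable (ℕ → Bool) :=
      Function.Injective.countable (f := fun σ => (⟨θ σ, hcon σ⟩ : Bad))
        (fun σ σ' hh => θinj (congrArg Subtype.val hh))
    exact myUncountable this
  obtain ⟨σs, hσs⟩ := hgoodσ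
  set ts : ℝ := θ σs with hts_def
  have htsIcc : 0 ≤ ts ∧ ts ≤ β := hθIcc σs
  have hit : ∀ n, f^[n] (φ (xf ts)) ∈ K (sfun σs n) := hθit σs
  have hcontAt : ContinuousAt hbar ts := by
    by_contra hcon
    exact hσs (Or.inl hcon)
  have hts0 : ts ≠ 0 := fun h => hσs (Or.inr (Or.inl h))
  have htsβ : ts ≠ β := fun h => hσs (Or.inr (Or.inr h))
  have hts0' : 0 < ts := lt_of_le_of_ne htsIcc.1 (Ne.symm hts0)
  have htsβ' : ts < β := lt_of_le_of_ne htsIcc.2 htsβ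
  -- ## goodness: small oscillation around ts
  have hgood : ∀ ε > (0:ℝ), ∃ k k', u k < ts ∧ ts < u k' ∧ F k' - F k < ε := by
    intro ε hε
    obtain ⟨δ, hδ, hball⟩ := Metric.continuousAt_iff.1 hcontAt (ε/2) (by positivity)
    have hb1 : |hbar (ts - δ/2) - hbar ts| < ε/2 := by
      have hd : dist (ts - δ/2) ts < δ := by
        rw [Real.dist_eq, show ts - δ/2 - ts = -(δ/2) by ring, abs_neg,
          abs_of_nonneg (by linarith : (0:ℝ) ≤ δ/2)]
        linarith
      have := hball hd
      rwa [Real.dist_eq] at this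
    have hb2 : |hbar (ts + δ/2) - hbar ts| < ε/2 := by
      have hd : dist (ts + δ/2) ts < δ := by
        rw [Real.dist_eq, show ts + δ/2 - ts = δ/2 by ring,
          abs_of_nonneg (by linarith : (0:ℝ) ≤ δ/2)]
        linarith
      have := hball hd
      rwa [Real.dist_eq] at this
    have hdiff : hbar (ts + δ/2) - hbar (ts - δ/2) < ε := by
      have h1 := abs_lt.1 hb1
      have h2 := abs_lt.1 hb2
      linarith [h1.1, h1.2, h2.1, h2.2]
    obtain ⟨k, hk1, hk2⟩ := hudense (max (ts - δ/2) 0) ts (le_max_right _ _) htsIcc.2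
      (max_lt (by linarith) hts0')
    obtain ⟨k', hk'1, hk'2⟩ := hudense ts (min (ts + δ/2) β) htsIcc.1 (min_le_right _ _)
      (lt_min (by linarith) htsβ')
    refine ⟨k, k', hk2, hk'1, ?_⟩
    have hFk : hbar (ts - δ/2) ≤ F k := by
      apply hbar_le
      intro k'' hk''
      apply hFmono
      calc u k'' ≤ ts - δ/2 := hk''
        _ ≤ max (ts - δ/2) 0 := le_max_left _ _
        _ ≤ u k := hk1.le
    have hFk' : F k' ≤ hbar (ts + δ/2) := by
      apply hbar_ge
      calc u k' ≤ min (ts + δ/2) β := hk'2.le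
        _ ≤ ts + δ/2 := min_le_left _ _
    linarith
  -- ## the orbit heights at ts form a Cauchy sequence
  set α : ℕ → ℝ := fun j => Hn (ψ j) ts with hα_def
  have hcauchy : CauchySeq α := by
    rw [Metric.cauchySeq_iff']
    intro ε hε
    obtain ⟨k, k', hk, hk', hFdiff⟩ := hgood (ε/4) (by positivity)
    obtain ⟨N₁, hN₁⟩ := Metric.tendsto_atTop.1 (htendF k) (ε/4) (by positivity)
    obtain ⟨N₂, hN₂⟩ := Metric.tendsto_atTop.1 (htendF k') (ε/4) (by positivity)
    refine ⟨max N₁ N₂, fun n hn => ?_⟩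
    have hband : ∀ j, j ≥ max N₁ N₂ → F k - ε/4 < α j ∧ α j < F k' + ε/4 := by
      intro j hj
      have hl := hN₁ j (le_trans (le_max_left _ _) hj)
      have hr := hN₂ j (le_trans (le_max_right _ _) hj)
      rw [Real.dist_eq, abs_lt] at hl hr
      have hm1 : Hn (ψ j) (u k) ≤ α j :=
        ((hHmono (ψ j)) ⟨(hu k).1, (hu k).2⟩ ⟨htsIcc.1, htsIcc.2⟩ hk).le
      have hm2 : α j ≤ Hn (ψ j) (u k') :=
        ((hHmono (ψ j)) ⟨htsIcc.1, htsIcc.2⟩ ⟨(hu k').1, (hu k').2⟩ hk').le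
      constructor <;> [linarith [hl.1, hl.2]; linarith [hr.1, hr.2]]
    have h1 := hband n hn
    have h2 := hband (max N₁ N₂) le_rfl
    rw [Real.dist_eq, abs_lt]
    constructor <;> linarith [h1.1, h1.2, h2.1, h2.2]
  obtain ⟨τ, hτ⟩ := cauchySeq_tendsto_of_complete hcauchy
  -- ## the limit point and the contradiction
  have hvalseq : ∀ j, ((g^[ψ j] (xf ts) : X) : ℝ × ℝ) = (cn (ψ j), α j) := fun j =>
    Prod.ext (horb1 _ _) rfl
  have htendval : Filter.Tendsto (fun j => (cn (ψ j), α j)) Filter.atTop (nhds (cstar, τ)) :=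
    htendc.prodMk_nhds hτ
  have hlimX : (cstar, τ) ∈ X := by
    apply hXcomp.isClosed.mem_of_tendsto htendval
    exact Filter.Eventually.of_forall fun j => by rw [← hvalseq j]; exact hdomX _ _
  have htendsub : Filter.Tendsto (fun j => g^[ψ j] (xf ts)) Filter.atTop
      (nhds (⟨(cstar, τ), hlimX⟩ : X)) := by
    rw [tendsto_subtype_rng]
    exact htendval.congr (fun j => (hvalseq j).symm)
  set w : Y := φ (⟨(cstar, τ), hlimX⟩ : X) with hw_def
  have htendw : Filter.Tendsto (fun j => f^[ψ j] (φ (xf ts))) Filter.atTop (nhds w) := by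
    have h1 : Filter.Tendsto (fun j => φ (g^[ψ j] (xf ts))) Filter.atTop (nhds w) :=
      (hφ.tendsto _).comp htendsub
    exact h1.congr (fun j => (hcommn (ψ j) (xf ts)).symm)
  have hmul3 : Filter.Tendsto (fun j : ℕ => 3*j) Filter.atTop Filter.atTop :=
    Filter.tendsto_atTop_mono (fun j => by simp only [id_eq]; omega) Filter.tendsto_id
  have hmul31 : Filter.Tendsto (fun j : ℕ => 3*j+1) Filter.atTop Filter.atTop :=
    Filter.tendsto_atTop_mono (fun j => by simp only [id_eq]; omega) Filter.tendsto_id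
  have hw0 : w ∈ K false := by
    refine (hKc false).isClosed.mem_of_tendsto (htendw.comp hmul3)
      (Filter.Eventually.of_forall fun j => ?_)
    have := hit (ψ (3*j))
    rwa [lab0] at this
  have hw1 : w ∈ K true := by
    refine (hKc true).isClosed.mem_of_tendsto (htendw.comp hmul31)
      (Filter.Eventually.of_forall fun j => ?_)
    have := hit (ψ (3*j+1))
    rwa [lab1] at this
  exact Set.disjoint_left.1 hKdisj hw0 hw1
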